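/- arXiv:1906.11012 — 8 statements merged into one kernel-verified Lean document; each statement's English description precedes it below -/
import Mathlib

section
/- Let ξ(λ) be the unique positive solution of ξ = (1+λ)(1-e^{-ξ}) for λ > 0. Then λ ≤ ξ(λ) ≤ min(2λ, 1+λ) for all λ > 0. -/
/-- Key inequality: for 0 < lam < 1, exp(2 lam) * (1 - lam) ≤ 1 + lam. -/
lemma xi_key (lam : ℝ) (h0 : 0 < lam) (h1 : lam < 1) :
    Real.exp (2 * lam) * (1 - lam) ≤ 1 + lam := by
  rcases le_or_gt lam (1/2) with hc | hc
  · -- small case: Taylor bound at -(2 lam)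
    have hy0 : 0 < 2 * lam := by positivity
    have hb := Real.exp_bound (x := -(2*lam)) (by rw [abs_neg, abs_of_pos hy0]; linarith)
      (n := 6) (by norm_num)
    rw [Finset.sum_range_succ, Finset.sum_range_succ, Finset.sum_range_succ,
      Finset.sum_range_succ, Finset.sum_range_succ, Finset.sum_range_succ,
      Finset.sum_range_zero] at hb
    norm_num [Nat.factorial] at hb
    rw [abs_of_pos h0, abs_le] at hb
    have hlow : 1 - 2*lam + 2*lam^2 - (4/3)*lam^3 + (2/3)*lam^4 - (4/15)*lam^5
        - (448/4320)*lam^6 ≤ Real.exp (-(2*lam)) := by nlinarith [hb.1]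
    have h38 : lam^3 ≤ 1/8 := by nlinarith
    have h416 : lam^4 ≤ 1/16 := by nlinarith [sq_nonneg lam, sq_nonneg (lam^2 - 1/4)]
    have hbr : (0:ℝ) ≤ 2/3 - (2/3)*lam + (2/5)*lam^2 - (4/15+448/4320)*lam^3
        - (448/4320)*lam^4 := by nlinarith [sq_nonneg lam]
    have hpoly : 1 - lam ≤ (1+lam) * (1 - 2*lam + 2*lam^2 - (4/3)*lam^3 + (2/3)*lam^4
        - (4/15)*lam^5 - (448/4320)*lam^6) := by
      nlinarith [mul_nonneg (pow_nonneg h0.le 3) hbr]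
    have hstep : 1 - lam ≤ (1 + lam) * Real.exp (-(2*lam)) := by
      nlinarith [hlow, hpoly]
    have hmul : Real.exp (2*lam) * Real.exp (-(2*lam)) = 1 := by
      rw [← Real.exp_add]; simp
    nlinarith [hstep, Real.exp_pos (2*lam), hmul, Real.exp_pos (-(2*lam))]
  · -- large case
    set s : ℝ := 2 * lam - 1 with hs
    have hs0 : 0 < s := by simp [hs]; linarith
    have hs1 : s < 1 := by simp [hs]; linarith
    have hes : (1 - s) * Real.exp s ≤ 1 := by
      have h2 : (1 : ℝ) - s ≤ (Real.exp s)⁻¹ := by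
        rw [← Real.exp_neg]; linarith [Real.add_one_le_exp (-s)]
      have := mul_le_mul_of_nonneg_right h2 (Real.exp_pos s).le
      rwa [inv_mul_cancel₀ (Real.exp_pos s).ne'] at this
    have hsplit : Real.exp (2 * lam) = Real.exp 1 * Real.exp s := by
      rw [← Real.exp_add, hs]; ring_nf
    rw [hsplit]
    nlinarith [hes, Real.exp_one_lt_d9, Real.exp_pos 1, Real.exp_pos s,
      mul_le_mul_of_nonneg_left hes (Real.exp_pos 1).le]

theorem xi_bounds (xi : ℝ → ℝ)
    (hxi : ∀ lam : ℝ, 0 < lam →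
      0 < xi lam ∧ xi lam = (1 + lam) * (1 - Real.exp (-(xi lam)))) :
    ∀ lam : ℝ, 0 < lam → lam ≤ xi lam ∧ xi lam ≤ min (2 * lam) (1 + lam) := by
  intro lam hlam
  obtain ⟨hx0, heq⟩ := hxi lam hlam
  set x := xi lam with hxdef
  have hupper : x < 1 + lam := by nlinarith [Real.exp_pos (-x)]
  have hE2 : (1 + lam) * Real.exp (-x) = 1 + lam - x := by linear_combination heq
  have hprod : Real.exp x * Real.exp (-x) = 1 := by rw [← Real.exp_add]; simp
  have hE : Real.exp x * (1 + lam - x) = 1 + lam := by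
    calc Real.exp x * (1 + lam - x) = Real.exp x * ((1 + lam) * Real.exp (-x)) := by rw [hE2]
      _ = (1 + lam) * (Real.exp x * Real.exp (-x)) := by ring
      _ = 1 + lam := by rw [hprod]; ring
  have hpos : 0 < 1 + lam - x := by linarith
  have hlower : lam ≤ x := by
    nlinarith [mul_le_mul_of_nonneg_right (Real.add_one_le_exp x) hpos.le, hE]
  refine ⟨hlower, le_min ?_ hupper.le⟩
  -- x ≤ 2 lam
  by_contra hcon
  push_neg at hcon
  have hl1 : lam < 1 := by linarith
  have hkey := xi_key lam hlam hl1
  set s : ℝ := x - 2 * lam with hs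
  have hs0 : 0 < s := by simp [hs]; linarith
  have hs1 : s < 1 - lam := by simp [hs]; linarith
  have hes : (1 - s) * Real.exp s ≤ 1 := by
    have h2 : (1 : ℝ) - s ≤ (Real.exp s)⁻¹ := by
      rw [← Real.exp_neg]; linarith [Real.add_one_le_exp (-s)]
    have := mul_le_mul_of_nonneg_right h2 (Real.exp_pos s).le
    rwa [inv_mul_cancel₀ (Real.exp_pos s).ne'] at this
  have hsplit : Real.exp x = Real.exp (2 * lam) * Real.exp s := by
    rw [← Real.exp_add]; congr 1; rw [hs]; ring
  rw [hsplit] at hE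
  -- exp(2λ) * exp s * (1 + λ - x) = 1 + λ,  1 + λ - x = 1 - λ - s
  have h2e : 1 < Real.exp (2 * lam) := by
    rw [show (1:ℝ) = Real.exp 0 by simp]
    exact Real.exp_lt_exp.2 (by linarith)
  have hxs : x = 2 * lam + s := by rw [hs]; ring
  have hP : 0 < Real.exp (2*lam) * Real.exp s :=
    mul_pos (Real.exp_pos (2*lam)) (Real.exp_pos s)
  have hb2 : Real.exp (2*lam) * ((1 - s) * Real.exp s) ≤ Real.exp (2*lam) := by
    calc Real.exp (2*lam) * ((1 - s) * Real.exp s) ≤ Real.exp (2*lam) * 1 :=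
          mul_le_mul_of_nonneg_left hes (Real.exp_pos (2*lam)).le
      _ = Real.exp (2*lam) := by ring
  nlinarith [hE, hb2, hkey, hP, hxs, mul_pos hP hs0,
    mul_le_mul_of_nonneg_left hkey hlam.le, mul_pos hP (sub_pos.2 hl1)]
end

section
/- Let ξ(λ) be the unique positive solution of ξ = (1+λ)(1-e^{-ξ}) for λ > 0. Then ξ is differentiable and ξ'(λ) = ξ(λ) / ((1+λ)(ξ(λ) - λ)), which is positive; hence ξ is strictly increasing. -/
open Real Filter
open scoped Topology

/-- The explicit inverse function: `h x = x / (1 - e^{-x}) - 1`. -/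
noncomputable def xiInv (x : ℝ) : ℝ := x / (1 - Real.exp (-x)) - 1

lemma one_sub_exp_pos {x : ℝ} (hx : 0 < x) : 0 < 1 - Real.exp (-x) := by
  have : Real.exp (-x) < 1 := Real.exp_lt_one_iff.mpr (by linarith)
  linarith

lemma key_pos {x : ℝ} (hx : 0 < x) : 0 < 1 - Real.exp (-x) - x * Real.exp (-x) := by
  have h1 : x + 1 < Real.exp x := Real.add_one_lt_exp (ne_of_gt hx)
  have h2 : Real.exp (-x) * Real.exp x = 1 := by
    rw [← Real.exp_add]; simp
  have h3 : 0 < Real.exp (-x) := Real.exp_pos _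
  nlinarith [mul_lt_mul_of_pos_left h1 h3]

lemma xiInv_hasStrictDerivAt {x : ℝ} (hx : 0 < x) :
    HasStrictDerivAt xiInv
      ((1 - Real.exp (-x) - x * Real.exp (-x)) / (1 - Real.exp (-x)) ^ 2) x := by
  have hg : HasStrictDerivAt (fun y : ℝ => 1 - Real.exp (-y)) (Real.exp (-x)) x := by
    have h1 : HasStrictDerivAt (fun y : ℝ => Real.exp (-y)) (-Real.exp (-x)) x := by
      have := (Real.hasStrictDerivAt_exp (-x)).comp x (hasStrictDerivAt_neg x)
      simpa [mul_comm, Function.comp_def] using this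
    simpa [Pi.sub_def] using (hasStrictDerivAt_const x (1 : ℝ)).sub h1
  have hdiv := (hasStrictDerivAt_id x).div hg (ne_of_gt (one_sub_exp_pos hx))
  have h := hdiv.sub_const 1
  have harith : (1 - Real.exp (-x) - x * Real.exp (-x)) / (1 - Real.exp (-x)) ^ 2 =
      (1 * (1 - Real.exp (-x)) - id x * Real.exp (-x)) / (1 - Real.exp (-x)) ^ 2 := by
    simp
  rw [show xiInv = (fun y : ℝ => id y / (1 - Real.exp (-y)) - 1) from rfl, harith]
  exact h

lemma xiInv_strictMonoOn : StrictMonoOn xiInv (Set.Ioi (0 : ℝ)) := by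
  apply strictMonoOn_of_deriv_pos (convex_Ioi 0)
  · intro x hx
    exact ((xiInv_hasStrictDerivAt hx).hasDerivAt.continuousAt).continuousWithinAt
  · intro x hx
    rw [interior_Ioi] at hx
    rw [(xiInv_hasStrictDerivAt hx).hasDerivAt.deriv]
    exact div_pos (key_pos hx) (pow_pos (one_sub_exp_pos hx) 2)

theorem xi_deriv (xi : ℝ → ℝ)
    (hxi : ∀ lam : ℝ, 0 < lam →
      0 < xi lam ∧ xi lam = (1 + lam) * (1 - Real.exp (-(xi lam)))) :
    (∀ lam : ℝ, 0 < lam →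
      HasDerivAt xi (xi lam / ((1 + lam) * (xi lam - lam))) lam ∧
      0 < xi lam / ((1 + lam) * (xi lam - lam))) ∧
    StrictMonoOn xi (Set.Ioi (0 : ℝ)) := by
  -- xiInv (xi lam) = lam
  have hleft : ∀ lam : ℝ, 0 < lam → xiInv (xi lam) = lam := by
    intro lam hlam
    obtain ⟨hpos, heq⟩ := hxi lam hlam
    have h1 : (0:ℝ) < 1 - Real.exp (-(xi lam)) := one_sub_exp_pos hpos
    have h2 : xi lam / (1 - Real.exp (-(xi lam))) = 1 + lam := by
      field_simp
      linarith [heq]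
    rw [xiInv, h2]
    ring
  -- xi lam > lam
  have hgt : ∀ lam : ℝ, 0 < lam → lam < xi lam := by
    intro lam hlam
    obtain ⟨hpos, heq⟩ := hxi lam hlam
    have hk := key_pos hpos
    have hE : 0 < Real.exp (-(xi lam)) := Real.exp_pos _
    nlinarith [mul_lt_mul_of_pos_left (show (1 + xi lam) * Real.exp (-(xi lam)) < 1 by nlinarith)
      (show (0:ℝ) < 1 + lam by linarith)]
  -- key: xi = local inverse; eventually left-inverse of xiInv near xi lam
  have hmain : ∀ lam : ℝ, 0 < lam →
      HasDerivAt xi (xi lam / ((1 + lam) * (xi lam - lam))) lam := by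
    intro lam hlam
    obtain ⟨hpos, heq⟩ := hxi lam hlam
    have hD := xiInv_hasStrictDerivAt hpos
    have hDne : (1 - Real.exp (-(xi lam)) - xi lam * Real.exp (-(xi lam))) /
        (1 - Real.exp (-(xi lam))) ^ 2 ≠ 0 :=
      ne_of_gt (div_pos (key_pos hpos) (pow_pos (one_sub_exp_pos hpos) 2))
    -- eventually, xi (xiInv x) = x for x near xi lam
    have hev : ∀ᶠ x in 𝓝 (xi lam), xi (xiInv x) = x := by
      have h1 : ∀ᶠ x in 𝓝 (xi lam), 0 < x := eventually_gt_nhds hpos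
      have h2 : ∀ᶠ x in 𝓝 (xi lam), 0 < xiInv x := by
        have hc : ContinuousAt xiInv (xi lam) := hD.hasDerivAt.continuousAt
        have hval : xiInv (xi lam) ∈ Set.Ioi (0:ℝ) := by
          rw [Set.mem_Ioi, hleft lam hlam]; exact hlam
        exact eventually_of_mem (hc.preimage_mem_nhds (Ioi_mem_nhds hval)) (fun x hx => hx)
      filter_upwards [h1, h2] with x hx hinvx
      have hx2 := hxi (xiInv x) hinvx
      have : xiInv (xi (xiInv x)) = xiInv x := hleft _ hinvx
      exact xiInv_strictMonoOn.injOn (Set.mem_Ioi.mpr hx2.1) (Set.mem_Ioi.mpr hx) this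
    have hstrict := hD.to_local_left_inverse hDne hev
    rw [hleft lam hlam] at hstrict
    have hform : ((1 - Real.exp (-(xi lam)) - xi lam * Real.exp (-(xi lam))) /
        (1 - Real.exp (-(xi lam))) ^ 2)⁻¹ = xi lam / ((1 + lam) * (xi lam - lam)) := by
      have hl1 : (0:ℝ) < 1 + lam := by linarith
      have hE : 1 - Real.exp (-(xi lam)) = xi lam / (1 + lam) := by
        field_simp at heq ⊢; linarith
      rw [hE]
      have hxl : xi lam - lam ≠ 0 := ne_of_gt (by linarith [hgt lam hlam])
      have hxp : xi lam ≠ 0 := ne_of_gt hpos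
      have hEe : Real.exp (-(xi lam)) = 1 - xi lam / (1 + lam) := by linarith
      rw [hEe]
      rw [show (xi lam / (1 + lam) - xi lam * (1 - xi lam / (1 + lam))) / (xi lam / (1 + lam)) ^ 2
          = ((1 + lam) * (xi lam - lam)) / xi lam from by field_simp; ring, inv_div]
    rw [hform] at hstrict
    exact hstrict.hasDerivAt
  refine ⟨fun lam hlam => ⟨hmain lam hlam, ?_⟩, ?_⟩
  · have := hxi lam hlam
    exact div_pos this.1 (mul_pos (by linarith) (by linarith [hgt lam hlam]))
  · intro a ha b hb hab
    simp only [Set.mem_Ioi] at ha hb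
    by_contra hle
    push_neg at hle
    have hxa := (hxi a ha).1
    have hxb := (hxi b hb).1
    rcases lt_or_eq_of_le hle with h | h
    · have := xiInv_strictMonoOn (Set.mem_Ioi.mpr hxb) (Set.mem_Ioi.mpr hxa) h
      rw [hleft a ha, hleft b hb] at this
      linarith
    · have : xiInv (xi b) = xiInv (xi a) := by rw [h]
      rw [hleft a ha, hleft b hb] at this
      linarith
end

section
/- Let ξ(λ) be the unique positive solution of ξ = (1+λ)(1-e^{-ξ}) for λ > 0. Then λ ↦ ξ(λ) - λ is nonnegative and increasing on (0,∞). -/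
/-- Secant slopes of `exp` through `0` are strictly monotone. -/
lemma exp_secant_lt {x y : ℝ} (hx : x ≠ 0) (hy : y ≠ 0) (hxy : x < y) :
    (Real.exp x - 1) / x < (Real.exp y - 1) / y := by
  have h := strictConvexOn_exp.secant_strict_mono (Set.mem_univ (0 : ℝ))
    (Set.mem_univ x) (Set.mem_univ y) hx hy hxy
  simpa using h

theorem xi_sub_lam_mono (xi : ℝ → ℝ)
    (hxi : ∀ lam : ℝ, 0 < lam →
      0 < xi lam ∧ xi lam = (1 + lam) * (1 - Real.exp (-(xi lam)))) :
    (∀ lam : ℝ, 0 < lam → 0 ≤ xi lam - lam) ∧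
    StrictMonoOn (fun lam => xi lam - lam) (Set.Ioi (0 : ℝ)) := by
  -- pointwise: lam < xi lam
  have hlt : ∀ lam : ℝ, 0 < lam → lam < xi lam := by
    intro lam hlam
    obtain ⟨hx, heq⟩ := hxi lam hlam
    set x := xi lam with hxdef
    have h1 : x + 1 < Real.exp x := Real.add_one_lt_exp (ne_of_gt hx)
    have hEpos : 0 < Real.exp (-x) := Real.exp_pos _
    have hE : Real.exp (-x) * Real.exp x = 1 := by
      rw [← Real.exp_add]; simp
    -- exp(-x) * (1+x) < 1
    have h2 : Real.exp (-x) * (1 + x) < 1 := by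
      nlinarith [mul_lt_mul_of_pos_left h1 hEpos]
    nlinarith [mul_pos hx hEpos, Real.exp_pos x]
  constructor
  · intro lam hlam
    linarith [hlt lam hlam]
  · intro a ha b hb hab
    simp only [Set.mem_Ioi] at ha hb
    obtain ⟨hx0, hxeq⟩ := hxi a ha
    obtain ⟨hy0, hyeq⟩ := hxi b hb
    set x := xi a with hxd
    set y := xi b with hyd
    set Ex := Real.exp (-x) with hExd
    set Ey := Real.exp (-y) with hEyd
    have hExpos : 0 < Ex := Real.exp_pos _
    have hEypos : 0 < Ey := Real.exp_pos _
    have hEx1 : Ex * Real.exp x = 1 := by rw [hExd, ← Real.exp_add]; simp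
    have hEy1 : Ey * Real.exp y = 1 := by rw [hEyd, ← Real.exp_add]; simp
    have hP : 0 < 1 - Ex := by
      nlinarith [Real.add_one_lt_exp (ne_of_gt hx0), Real.exp_pos x]
    have hQ : 0 < 1 - Ey := by
      nlinarith [Real.add_one_lt_exp (ne_of_gt hy0), Real.exp_pos y]
    -- first: x < y
    have hxy : x < y := by
      by_contra h
      push_neg at h
      have hlt2 : x * (1 - Ey) < y * (1 - Ex) := by
        have hxQ : x * (1 - Ey) = (1 + a) * ((1 - Ex) * (1 - Ey)) := by rw [hxeq]; ring
        have hyP : y * (1 - Ex) = (1 + b) * ((1 - Ex) * (1 - Ey)) := by rw [hyeq]; ring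
        rw [hxQ, hyP]
        exact mul_lt_mul_of_pos_right (by linarith) (mul_pos hP hQ)
      rcases eq_or_lt_of_le h with h' | h'
      · have hEe : Ex = Ey := by rw [hExd, hEyd, h']
        rw [h', hEe] at hlt2
        exact lt_irrefl _ hlt2
      · -- y < x: secant at -x < -y < 0 gives (1-Ex)/x < (1-Ey)/y
        have hs := exp_secant_lt (x := -x) (y := -y) (by linarith) (by linarith) (by linarith)
        have hs' : (1 - Ex) / x < (1 - Ey) / y := by
          rw [hExd, hEyd]
          calc (1 - Real.exp (-x)) / x = (Real.exp (-x) - 1) / (-x) := by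
                rw [div_neg, ← neg_div]; ring_nf
            _ < (Real.exp (-y) - 1) / (-y) := hs
            _ = (1 - Real.exp (-y)) / y := by rw [div_neg, ← neg_div]; ring_nf
        rw [div_lt_div_iff₀ hx0 hy0] at hs'
        nlinarith [hs', hlt2]
    -- key inequality
    have key : y * (Real.exp x - 1) < x * (Real.exp y - 1) := by
      have hs := exp_secant_lt (x := x) (y := y) (ne_of_gt hx0) (ne_of_gt hy0) hxy
      rw [div_lt_div_iff₀ hx0 hy0] at hs
      linarith
    have key2 : y * Ey * (1 - Ex) < x * Ex * (1 - Ey) := by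
      have h := mul_lt_mul_of_pos_right key (mul_pos hExpos hEypos)
      have e1 : y * Ey * (1 - Ex) = y * (Real.exp x - 1) * (Ex * Ey) := by
        linear_combination (-(y * Ey)) * hEx1
      have e2 : x * Ex * (1 - Ey) = x * (Real.exp y - 1) * (Ex * Ey) := by
        linear_combination (-(x * Ex)) * hEy1
      rw [e1, e2]; exact h
    -- conclude
    have ha' : a = x / (1 - Ex) - 1 := by
      field_simp
      nlinarith [hxeq]
    have hb' : b = y / (1 - Ey) - 1 := by
      field_simp
      nlinarith [hyeq]
    show x - a < y - b
    rw [ha', hb']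
    have h3 : x - y < x / (1 - Ex) - y / (1 - Ey) := by
      rw [div_sub_div _ _ (ne_of_gt hP) (ne_of_gt hQ), lt_div_iff₀ (mul_pos hP hQ)]
      nlinarith [key2]
    linarith
end

section
/- Let ξ(λ) be the unique positive solution of ξ = (1+λ)(1-e^{-ξ}) for λ > 0, and set v(λ) = (1+λ)(ξ(λ) - λ)/2. Then 2 v(λ) ≥ λ for all λ > 0. -/
open Real Set

lemma two_log_le (u : ℝ) (hu : 1 ≤ u) : 2 * Real.log u ≤ u - u⁻¹ := by
  have hmono : MonotoneOn (fun t : ℝ => t - t⁻¹ - 2 * Real.log t) (Ici 1) := by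
    apply monotoneOn_of_deriv_nonneg (convex_Ici 1)
    · apply ContinuousOn.sub
      · apply ContinuousOn.sub continuousOn_id
        exact continuousOn_id.inv₀ (fun t ht => by
          have : (1:ℝ) ≤ t := ht; simp only [id]; linarith)
      · apply ContinuousOn.mul continuousOn_const
        exact Real.continuousOn_log.mono (fun t ht => by
          have : (1:ℝ) ≤ t := ht; simp; linarith)
    · intro t ht
      rw [interior_Ici] at ht
      have ht1 : (1:ℝ) < t := ht
      have h0 : t ≠ 0 := by linarith
      exact ((differentiableAt_id.sub (differentiableAt_inv h0)).sub
        ((Real.differentiableAt_log h0).const_mul 2)).differentiableWithinAt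
    · intro t ht
      rw [interior_Ici] at ht
      have ht1 : (1:ℝ) < t := ht
      have h0 : t ≠ 0 := by linarith
      have hd : HasDerivAt (fun t : ℝ => t - t⁻¹ - 2 * Real.log t)
          (1 - (-(t^2)⁻¹) - 2 * (1/t)) t := by
        have h1 : HasDerivAt (fun t : ℝ => t⁻¹) (-(t^2)⁻¹) t := hasDerivAt_inv h0
        have h2 : HasDerivAt (fun t : ℝ => 2 * Real.log t) (2 * (1/t)) t := by
          simpa using (Real.hasDerivAt_log h0).const_mul 2
        exact ((hasDerivAt_id t).sub h1).sub h2
      rw [hd.deriv]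
      have heq : 1 - (-(t^2)⁻¹) - 2 * (1/t) = (1 - 1/t)^2 := by
        field_simp; ring
      rw [heq]; positivity
  have h1 : (1:ℝ) ∈ Ici (1:ℝ) := Set.mem_Ici.mpr le_rfl
  have h2 : u ∈ Ici (1:ℝ) := Set.mem_Ici.mpr hu
  have := hmono h1 h2 hu
  simp only [Real.log_one, inv_one, mul_zero, sub_self, sub_zero] at this
  linarith

lemma expAnti (lam : ℝ) :
    StrictAntiOn (fun t : ℝ => Real.exp t * (1 + lam - t)) (Ici lam) := by
  apply strictAntiOn_of_deriv_neg (convex_Ici lam)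
  · exact (Real.continuous_exp.mul (by continuity)).continuousOn
  · intro t ht
    rw [interior_Ici] at ht
    have htl : lam < t := ht
    have h2 : HasDerivAt (fun s : ℝ => 1 + lam - s) (-1) t := by
      have := (hasDerivAt_const t (1+lam)).sub (hasDerivAt_id' t); rwa [zero_sub] at this
    have hd : HasDerivAt (fun t : ℝ => Real.exp t * (1 + lam - t))
        (Real.exp t * (1 + lam - t) + Real.exp t * (-1)) t :=
      (Real.hasDerivAt_exp t).mul h2
    rw [hd.deriv]
    have hexp : 0 < Real.exp t := Real.exp_pos t
    nlinarith

theorem two_v_ge_lam (xi v : ℝ → ℝ)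
    (hxi : ∀ lam : ℝ, 0 < lam →
      0 < xi lam ∧ xi lam = (1 + lam) * (1 - Real.exp (-(xi lam))))
    (hv : ∀ lam : ℝ, v lam = (1 + lam) * (xi lam - lam) / 2) :
    ∀ lam : ℝ, 0 < lam → lam ≤ 2 * v lam := by
  intro lam hlam
  obtain ⟨hxpos, hxeq⟩ := hxi lam hlam
  set x := xi lam with hx
  have hl1 : (0:ℝ) < 1 + lam := by linarith
  have hkey : Real.exp x * (1 + lam - x) = 1 + lam := by
    have h1 : Real.exp (-x) * (1 + lam) = 1 + lam - x := by
      nlinarith [Real.exp_pos (-x)]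
    have h2 : Real.exp x * Real.exp (-x) = 1 := by
      rw [← Real.exp_add]; simp
    calc Real.exp x * (1 + lam - x) = Real.exp x * (Real.exp (-x) * (1 + lam)) := by rw [h1]
      _ = (Real.exp x * Real.exp (-x)) * (1 + lam) := by ring
      _ = 1 + lam := by rw [h2]; ring
  have hxgt : lam < x := by
    have hexp : 1 + x < Real.exp x := by
      have := Real.add_one_lt_exp (x := x) (by positivity)
      linarith
    by_contra h
    push_neg at h
    have h1 : (0:ℝ) < 1 + lam - x := by linarith
    have : (1 + x) * (1 + lam - x) < 1 + lam := by
      calc (1 + x) * (1 + lam - x) < Real.exp x * (1 + lam - x) :=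
            mul_lt_mul_of_pos_right hexp h1
        _ = 1 + lam := hkey
    nlinarith
  set x0 : ℝ := lam * (lam + 2) / (lam + 1) with hx0def
  have hx0lam : lam ≤ x0 := by
    rw [hx0def, le_div_iff₀ (by linarith)]
    nlinarith
  have hx0lt : 1 + lam - x0 = 1 / (1 + lam) := by
    rw [hx0def]; field_simp; ring
  have hlog : 2 * Real.log (1 + lam) ≤ x0 := by
    have h := two_log_le (1 + lam) (by linarith)
    have heq : (1 + lam) - (1 + lam)⁻¹ = x0 := by
      rw [hx0def]; field_simp; ring
    linarith
  have hexpx0 : (1 + lam)^2 ≤ Real.exp x0 := by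
    have h1 : Real.log ((1 + lam)^2) ≤ x0 := by
      rw [Real.log_pow]; push_cast; linarith
    calc (1 + lam)^2 = Real.exp (Real.log ((1+lam)^2)) := by
          rw [Real.exp_log (by positivity)]
      _ ≤ Real.exp x0 := Real.exp_le_exp.mpr h1
  have hhx0 : 1 + lam ≤ Real.exp x0 * (1 + lam - x0) := by
    rw [hx0lt]
    have h1 : (1 + lam)^2 * (1/(1+lam)) ≤ Real.exp x0 * (1/(1+lam)) :=
      mul_le_mul_of_nonneg_right hexpx0 (by positivity)
    calc 1 + lam = (1 + lam)^2 * (1/(1+lam)) := by field_simp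
      _ ≤ Real.exp x0 * (1/(1+lam)) := h1
  have hxx0 : x0 ≤ x := by
    by_contra h
    push_neg at h
    have := expAnti lam (Set.mem_Ici.mpr hxgt.le) (Set.mem_Ici.mpr hx0lam) h
    simp only at this
    rw [hkey] at this
    linarith
  rw [hv lam]
  have h1 : (1 + lam) * (x0 - lam) = lam := by
    rw [hx0def]; field_simp; ring
  have h2 : (1 + lam) * (x0 - lam) ≤ (1 + lam) * (x - lam) :=
    mul_le_mul_of_nonneg_left (by linarith) (by linarith)
  linarith
end

section
/- For every ξ > 0 and every θ ∈ [-π, π], |(e^{ξ e^{iθ}} - 1)/(ξ e^{iθ})| ≤ ((e^{ξ}-1)/ξ) · (1 - h(ξ) θ²), where h(ξ) = (1/π²) · 2ξ² / ((2+ξ)(e^{ξ}-1)). -/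
open Nat

lemma exp_tail_bound (z : ℂ) :
    ‖Complex.exp z - 1 - z - z ^ 2 / 2‖ ≤
      Real.exp ‖z‖ - 1 - ‖z‖ - ‖z‖ ^ 2 / 2 := by
  have hs : Summable fun n : ℕ => z ^ n / n ! := NormedSpace.expSeries_div_summable z
  have hsr : Summable fun n : ℕ => ‖z‖ ^ n / n ! :=
    NormedSpace.expSeries_div_summable ‖z‖
  have hz : Complex.exp z = ∑' n : ℕ, z ^ n / n ! := by
    rw [Complex.exp_eq_exp_ℂ, NormedSpace.exp_eq_tsum_div]
  have hr : Real.exp ‖z‖ = ∑' n : ℕ, ‖z‖ ^ n / n ! := by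
    rw [Real.exp_eq_exp_ℝ, NormedSpace.exp_eq_tsum_div]
  have key : Complex.exp z - 1 - z - z ^ 2 / 2 = ∑' n : ℕ, z ^ (n + 3) / ((n + 3)!) := by
    have := Summable.sum_add_tsum_nat_add 3 hs
    rw [hz, ← this, Finset.sum_range_succ, Finset.sum_range_succ, Finset.sum_range_one]
    norm_num [Nat.factorial]
    ring
  have keyr : Real.exp ‖z‖ - 1 - ‖z‖ - ‖z‖ ^ 2 / 2
      = ∑' n : ℕ, ‖z‖ ^ (n + 3) / ((n + 3)!) := by
    have := Summable.sum_add_tsum_nat_add 3 hsr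
    rw [hr, ← this, Finset.sum_range_succ, Finset.sum_range_succ, Finset.sum_range_one]
    norm_num [Nat.factorial]
    ring
  rw [key, keyr]
  have hnorm : ∀ n : ℕ, ‖z ^ (n + 3) / (((n + 3)! : ℕ) : ℂ)‖
      = ‖z‖ ^ (n + 3) / ((n + 3)!) := by
    intro n
    rw [norm_div, norm_pow]
    norm_num
  have hsum : Summable fun n : ℕ => ‖z ^ (n + 3) / (((n + 3)! : ℕ) : ℂ)‖ := by
    simp only [hnorm]
    exact (summable_nat_add_iff 3).2 hsr
  have h1 := norm_tsum_le_tsum_norm hsum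
  rw [tsum_congr hnorm] at h1
  exact h1

open Complex in
theorem B_tail_bound (xi : ℝ) (hxi : 0 < xi) (θ : ℝ)
    (hθ : θ ∈ Set.Icc (-Real.pi) Real.pi) :
    ‖(Complex.exp (xi * Complex.exp (θ * Complex.I)) - 1) /
        (xi * Complex.exp (θ * Complex.I))‖ ≤
      ((Real.exp xi - 1) / xi) *
        (1 - (1 / Real.pi ^ 2) * (2 * xi ^ 2 / ((2 + xi) * (Real.exp xi - 1))) * θ ^ 2) := by
  have hpi := Real.pi_pos
  set z : ℂ := (xi : ℂ) * Complex.exp (θ * Complex.I) with hzdef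
  have hzabs : ‖z‖ = xi := by
    rw [hzdef, norm_mul, Complex.norm_exp]
    simp [abs_of_pos hxi]
  set c : ℝ := Real.cos θ with hc
  have hc1 : c ≤ 1 := Real.cos_le_one θ
  have hc2 : -1 ≤ c := Real.neg_one_le_cos θ
  -- step B : |z + z^2/2| ≤ xi + xi^2/2 - xi^2*(1-c)/(2+xi)
  have hw : ‖z + z ^ 2 / 2‖
      ≤ xi + xi ^ 2 / 2 - xi ^ 2 * (1 - c) / (2 + xi) := by
    have hfac : z + z ^ 2 / 2 = z * (1 + z / 2) := by ring
    have hform : (1 : ℂ) + z / 2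
        = ((1 + xi / 2 * c : ℝ) : ℂ) + ((xi / 2 * Real.sin θ : ℝ) : ℂ) * Complex.I := by
      rw [hzdef, Complex.exp_mul_I, hc, ← Complex.ofReal_cos, ← Complex.ofReal_sin]
      push_cast
      ring
    have habs2 : ‖1 + z / 2‖ = Real.sqrt (1 + xi * c + xi ^ 2 / 4) := by
      rw [hform, Complex.norm_add_mul_I]
      congr 1
      have hs : Real.sin θ ^ 2 = 1 - c ^ 2 := by
        have := Real.sin_sq_add_cos_sq θ
        rw [← hc] at this; nlinarith
      nlinarith [hs]
    have hR : (0 : ℝ) ≤ 1 + xi / 2 - xi * (1 - c) / (2 + xi) := by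
      rw [sub_nonneg, div_le_iff₀ (by linarith)]
      nlinarith
    have hsq : Real.sqrt (1 + xi * c + xi ^ 2 / 4)
        ≤ 1 + xi / 2 - xi * (1 - c) / (2 + xi) := by
      rw [show (1 : ℝ) + xi / 2 - xi * (1 - c) / (2 + xi)
          = Real.sqrt ((1 + xi / 2 - xi * (1 - c) / (2 + xi)) ^ 2) from
        (Real.sqrt_sq hR).symm]
      apply Real.sqrt_le_sqrt
      have h2xi : (0 : ℝ) < 2 + xi := by linarith
      set d : ℝ := xi * (1 - c) / (2 + xi) with hddef
      have hd : d * (2 + xi) = xi * (1 - c) := by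
        rw [hddef]; field_simp
      nlinarith [sq_nonneg d]
    calc ‖z + z ^ 2 / 2‖ = xi * ‖1 + z / 2‖ := by
          rw [hfac, norm_mul, hzabs]
      _ ≤ xi * (1 + xi / 2 - xi * (1 - c) / (2 + xi)) := by
          rw [habs2]; exact mul_le_mul_of_nonneg_left hsq hxi.le
      _ = xi + xi ^ 2 / 2 - xi ^ 2 * (1 - c) / (2 + xi) := by
          field_simp
  -- remaining
  have hexp1 : (0 : ℝ) < Real.exp xi - 1 := by
    nlinarith [Real.add_one_le_exp xi]
  have h2xi : (0 : ℝ) < 2 + xi := by linarith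
  have tail := exp_tail_bound z
  rw [hzabs] at tail
  have hcos : 2 / Real.pi ^ 2 * θ ^ 2 ≤ 1 - c := by
    have := Real.cos_le_one_sub_mul_cos_sq (x := θ) (abs_le.mpr ⟨hθ.1, hθ.2⟩)
    rw [← hc] at this
    linarith
  have hE : ‖Complex.exp z - 1‖
      ≤ Real.exp xi - 1 - xi ^ 2 * (2 / Real.pi ^ 2 * θ ^ 2) / (2 + xi) := by
    have h1 : ‖Complex.exp z - 1‖
        ≤ ‖Complex.exp z - 1 - z - z ^ 2 / 2‖ + ‖z + z ^ 2 / 2‖ := by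
      have h0 := norm_add_le (Complex.exp z - 1 - z - z ^ 2 / 2) (z + z ^ 2 / 2)
      have heq : (Complex.exp z - 1 - z - z ^ 2 / 2) + (z + z ^ 2 / 2) = Complex.exp z - 1 := by
        ring
      rwa [heq] at h0
    have h2 : xi ^ 2 * (2 / Real.pi ^ 2 * θ ^ 2) / (2 + xi)
        ≤ xi ^ 2 * (1 - c) / (2 + xi) := by
      gcongr
    linarith
  have hLHS : ‖(Complex.exp z - 1) / z‖
      = ‖Complex.exp z - 1‖ / xi := by
    rw [norm_div, hzabs]
  have hRHS : ((Real.exp xi - 1) / xi) *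
        (1 - (1 / Real.pi ^ 2) * (2 * xi ^ 2 / ((2 + xi) * (Real.exp xi - 1))) * θ ^ 2)
      = (Real.exp xi - 1 - xi ^ 2 * (2 / Real.pi ^ 2 * θ ^ 2) / (2 + xi)) / xi := by
    field_simp
  rw [hLHS, hRHS]
  exact div_le_div_of_nonneg_right hE hxi.le
end

section
/- For nonnegative real numbers b₀, b₁ and θ ∈ ℝ, |b₀ + b₁ e^{iθ}| ≤ b₀ + b₁ - 2 b₀ b₁ sin²(θ/2) / (b₀ + b₁), provided b₀ + b₁ > 0. -/
theorem abs_add_exp_bound (b₀ b₁ θ : ℝ) (h₀ : 0 ≤ b₀) (h₁ : 0 ≤ b₁)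
    (hsum : 0 < b₀ + b₁) :
    ‖(b₀ : ℂ) + b₁ * Complex.exp (θ * Complex.I)‖ ≤
      b₀ + b₁ - 2 * b₀ * b₁ * Real.sin (θ / 2) ^ 2 / (b₀ + b₁) := by
  set s := b₀ + b₁ with hs
  set t := 2 * b₀ * b₁ * Real.sin (θ / 2) ^ 2 / s with ht
  have hsin : Real.sin (θ / 2) ^ 2 ≤ 1 := Real.sin_sq_le_one _
  have hsin0 : 0 ≤ Real.sin (θ / 2) ^ 2 := sq_nonneg _
  have ht0 : 0 ≤ t := by
    apply div_nonneg _ hsum.le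
    positivity
  have hts : t * s = 2 * b₀ * b₁ * Real.sin (θ / 2) ^ 2 := by
    rw [ht, div_mul_cancel₀ _ hsum.ne']
  have hrhs : 0 ≤ s - t := by
    rw [sub_nonneg, ht, div_le_iff₀ hsum]
    nlinarith [sq_nonneg (b₀ - b₁), mul_nonneg h₀ h₁]
  have hcos : Real.cos θ = 1 - 2 * Real.sin (θ / 2) ^ 2 := by
    have h1 := Real.cos_sq (θ/2)
    rw [show 2*(θ/2) = θ by ring] at h1
    have h2 : Real.sin (θ/2) ^ 2 + Real.cos (θ/2) ^ 2 = 1 := Real.sin_sq_add_cos_sq _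
    nlinarith
  have hns : ‖(b₀ : ℂ) + b₁ * Complex.exp (θ * Complex.I)‖ ^ 2
      = b₀ ^ 2 + b₁ ^ 2 + 2 * b₀ * b₁ * Real.cos θ := by
    rw [Complex.sq_norm, Complex.normSq_apply]
    simp [Complex.exp_mul_I, Complex.add_re, Complex.add_im, Complex.mul_re, Complex.mul_im,
      Complex.cos_ofReal_re, Complex.sin_ofReal_re]
    nlinarith [Real.sin_sq_add_cos_sq θ]
  have hsq : ‖(b₀ : ℂ) + b₁ * Complex.exp (θ * Complex.I)‖ ^ 2 ≤ (s - t) ^ 2 := by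
    rw [hns]
    nlinarith [sq_nonneg t, mul_nonneg h₀ h₁]
  calc ‖(b₀ : ℂ) + b₁ * Complex.exp (θ * Complex.I)‖
      ≤ s - t := le_of_pow_le_pow_left₀ two_ne_zero hrhs hsq
    _ = s - t := rfl
end

section
/- Fix an integer k ≥ 2 and 0 < a < 1/(4 e^k). For n ≥ 2, let ω₁, ω₂, … be i.i.d. uniform on {1,…,n}, and let y_m = #{ω₁,…,ω_m}. Then P(∃ ℓ with 1 ≤ ℓ ≤ an such that y_{kℓ+1} ≤ ℓ) ≤ 2/n². -/
open MeasureTheory ProbabilityTheory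

section aux
variable {Ω : Type*} [MeasurableSpace Ω] (μ : Measure Ω) [IsProbabilityMeasure μ]
    (n : ℕ) (X : ℕ → Ω → Fin n)

omit [IsProbabilityMeasure μ] in
lemma ecb_marginal (hmeas : ∀ i, Measurable (X i))
    (hunif : ∀ i (x : Fin n), μ {ω | X i ω = x} = 1 / (n : ENNReal))
    (S : Finset (Fin n)) (i : ℕ) :
    μ (X i ⁻¹' ↑S) = (S.card : ENNReal) / n := by
  have h1 : X i ⁻¹' ↑S = ⋃ x ∈ S, X i ⁻¹' {x} := by ext ω; simp
  rw [h1, measure_biUnion_finset]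
  · simp only [Set.preimage]
    have : ∀ x ∈ S, μ {ω | X i ω ∈ ({x} : Set (Fin n))} = 1 / (n:ENNReal) := by
      intro x _; simpa using hunif i x
    rw [Finset.sum_congr rfl this]
    simp [Finset.sum_const, div_eq_mul_inv]
  · intro x _ y _ hxy
    simp only [Function.onFun, Set.disjoint_left]
    intro ω hω hω'
    simp only [Set.mem_preimage, Set.mem_singleton_iff] at hω hω'
    exact hxy (hω ▸ hω'.symm ▸ rfl)
  · intro x _
    exact hmeas i (measurableSet_singleton x)

omit [IsProbabilityMeasure μ] in
lemma ecb_block (hmeas : ∀ i, Measurable (X i))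
    (hindep : iIndepFun X μ)
    (hunif : ∀ i (x : Fin n), μ {ω | X i ω = x} = 1 / (n : ENNReal))
    (S : Finset (Fin n)) (m : ℕ) :
    μ (⋂ i ∈ Finset.range m, X i ⁻¹' ↑S) = ((S.card : ENNReal) / n)^m := by
  rw [hindep.meas_biInter (fun i _ => ⟨↑S, S.measurableSet, rfl⟩)]
  rw [Finset.prod_congr rfl (fun i _ => ecb_marginal μ n X hmeas hunif S i)]
  simp

omit [IsProbabilityMeasure μ] in
lemma ecb_one_level (hmeas : ∀ i, Measurable (X i))
    (hindep : iIndepFun X μ)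
    (hunif : ∀ i (x : Fin n), μ {ω | X i ω = x} = 1 / (n : ENNReal))
    (k ℓ : ℕ) (hln : ℓ ≤ n) :
    μ {ω | ((Finset.range (k * ℓ + 1)).image (fun i => X i ω)).card ≤ ℓ}
      ≤ (n.choose ℓ : ENNReal) * ((ℓ : ENNReal)/n)^(k*ℓ+1) := by
  set m := k*ℓ+1
  have hsub : {ω | ((Finset.range m).image (fun i => X i ω)).card ≤ ℓ}
      ⊆ ⋃ S ∈ Finset.powersetCard ℓ (Finset.univ : Finset (Fin n)),
          ⋂ i ∈ Finset.range m, X i ⁻¹' (↑S : Set (Fin n)) := by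
    intro ω hω
    simp only [Set.mem_setOf_eq] at hω
    obtain ⟨S, hS1, _, hS3⟩ := Finset.exists_subsuperset_card_eq
      (Finset.subset_univ ((Finset.range m).image (fun i => X i ω))) hω
      (by simpa using hln)
    refine Set.mem_iUnion₂.2 ⟨S, Finset.mem_powersetCard.2 ⟨Finset.subset_univ S, hS3⟩, ?_⟩
    simp only [Set.mem_iInter, Set.mem_preimage]
    intro i hi
    exact hS1 (Finset.mem_image.2 ⟨i, hi, rfl⟩)
  calc μ {ω | ((Finset.range m).image (fun i => X i ω)).card ≤ ℓ}
      ≤ μ (⋃ S ∈ Finset.powersetCard ℓ (Finset.univ : Finset (Fin n)),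
          ⋂ i ∈ Finset.range m, X i ⁻¹' (↑S : Set (Fin n))) := measure_mono hsub
    _ ≤ ∑ S ∈ Finset.powersetCard ℓ (Finset.univ : Finset (Fin n)),
          μ (⋂ i ∈ Finset.range m, X i ⁻¹' (↑S : Set (Fin n))) :=
        measure_biUnion_finset_le _ _
    _ = ∑ S ∈ Finset.powersetCard ℓ (Finset.univ : Finset (Fin n)),
          ((ℓ : ENNReal)/n)^m := by
        apply Finset.sum_congr rfl
        intro S hS
        rw [ecb_block μ n X hmeas hindep hunif S m,
          (Finset.mem_powersetCard.1 hS).2]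
    _ = (n.choose ℓ : ENNReal) * ((ℓ : ENNReal)/n)^m := by
        rw [Finset.sum_const, Finset.card_powersetCard, Finset.card_univ,
          Fintype.card_fin, nsmul_eq_mul]

end aux

lemma ecb_ratio_step (k n ℓ : ℕ) (hk : 2 ≤ k) (a : ℝ) (ha : 0 < a) (ha1 : a ≤ 1)
    (haek : 4 * Real.exp k * a ≤ 1)
    (hn : 2 ≤ n) (hl : 1 ≤ ℓ) (hl2 : ((ℓ:ℝ) + 1) ≤ a * n) :
    (n.choose (ℓ+1) : ℝ) * (((ℓ:ℝ)+1)/n)^(k*(ℓ+1)+1)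
      ≤ (1/2) * ((n.choose ℓ : ℝ) * ((ℓ:ℝ)/n)^(k*ℓ+1)) := by
  have hN : (0:ℝ) < n := by positivity
  have hx : (0:ℝ) < ℓ := by exact_mod_cast hl
  have hln' : (ℓ:ℝ)+1 ≤ n := le_trans hl2 (by nlinarith)
  have hln : ℓ ≤ n := by
    have : (ℓ:ℝ) ≤ n := by linarith
    exact_mod_cast this
  have hch : (n.choose (ℓ+1) : ℝ) * (ℓ+1) = (n.choose ℓ : ℝ) * (n - ℓ) := by
    have := Nat.choose_succ_right_eq n ℓ
    have h2 : ((n.choose (ℓ+1) * (ℓ+1) : ℕ) : ℝ) = ((n.choose ℓ * (n - ℓ) : ℕ) : ℝ) := by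
      exact_mod_cast congrArg (Nat.cast : ℕ → ℝ) this
    push_cast [Nat.cast_sub hln] at h2
    linarith
  have key : ((n:ℝ) - ℓ) * ((ℓ:ℝ)+1)^(k*ℓ+k) ≤ (1/2) * (ℓ:ℝ)^(k*ℓ+1) * (n:ℝ)^k := by
    have hexp : ((ℓ:ℝ)+1)^(k*ℓ) ≤ Real.exp k * (ℓ:ℝ)^(k*ℓ) := by
      have hinv : (ℓ:ℝ) * (1/ℓ) = 1 := by field_simp
      have h0 := Real.add_one_le_exp (1/(ℓ:ℝ))
      have h1 : (ℓ:ℝ)+1 ≤ (ℓ:ℝ) * Real.exp (1/ℓ) := by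
        nlinarith [mul_le_mul_of_nonneg_left h0 hx.le]
      calc ((ℓ:ℝ)+1)^(k*ℓ) ≤ ((ℓ:ℝ) * Real.exp (1/ℓ))^(k*ℓ) := by
            apply pow_le_pow_left₀ (by positivity) h1
        _ = (ℓ:ℝ)^(k*ℓ) * Real.exp (((k*ℓ:ℕ):ℝ) * (1/ℓ)) := by
            rw [mul_pow, ← Real.exp_nat_mul]
        _ = Real.exp k * (ℓ:ℝ)^(k*ℓ) := by
            rw [show ((k*ℓ:ℕ):ℝ) * (1/(ℓ:ℝ)) = (k:ℝ) by push_cast; field_simp,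
              mul_comm]
    have hak : (a*(n:ℝ))^(k-1) ≤ a * (n:ℝ)^(k-1) := by
      rw [mul_pow]
      have : a^(k-1) ≤ a := by
        calc a^(k-1) ≤ a^1 := pow_le_pow_of_le_one ha.le ha1 (by omega)
          _ = a := pow_one a
      exact mul_le_mul_of_nonneg_right this (by positivity)
    have hpowk : ((ℓ:ℝ)+1)^k ≤ 2 * (ℓ:ℝ) * (a * (n:ℝ)^(k-1)) := by
      have h1 : (ℓ:ℝ)+1 ≤ 2*ℓ := by
        have : (1:ℝ) ≤ ℓ := by exact_mod_cast hl
        linarith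
      calc ((ℓ:ℝ)+1)^k = ((ℓ:ℝ)+1) * ((ℓ:ℝ)+1)^(k-1) := by
            rw [← pow_succ']; congr 1; omega
        _ ≤ (2*(ℓ:ℝ)) * (a*n)^(k-1) :=
            mul_le_mul h1 (pow_le_pow_left₀ (by positivity) hl2 _) (by positivity) (by positivity)
        _ ≤ 2 * (ℓ:ℝ) * (a * (n:ℝ)^(k-1)) := by
            exact mul_le_mul_of_nonneg_left hak (by positivity)
    have hsplit : ((ℓ:ℝ)+1)^(k*ℓ+k) = ((ℓ:ℝ)+1)^(k*ℓ) * ((ℓ:ℝ)+1)^k := pow_add _ _ _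
    have hNk : (n:ℝ)^k = (n:ℝ) * (n:ℝ)^(k-1) := by
      rw [← pow_succ']; congr 1; omega
    have hexpk := Real.exp_pos (k:ℝ)
    have hsub : (n:ℝ) - ℓ ≤ n := by linarith
    calc ((n:ℝ) - ℓ) * ((ℓ:ℝ)+1)^(k*ℓ+k)
        ≤ (n:ℝ) * (((ℓ:ℝ)+1)^(k*ℓ) * ((ℓ:ℝ)+1)^k) := by
          rw [hsplit]; exact mul_le_mul_of_nonneg_right hsub (by positivity)
      _ ≤ (n:ℝ) * ((Real.exp k * (ℓ:ℝ)^(k*ℓ)) * (2 * (ℓ:ℝ) * (a * (n:ℝ)^(k-1)))) := by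
          apply mul_le_mul_of_nonneg_left _ hN.le
          exact mul_le_mul hexp hpowk (by positivity) (by positivity)
      _ = (2 * Real.exp k * a) * ((ℓ:ℝ)^(k*ℓ) * (ℓ:ℝ)) * ((n:ℝ) * (n:ℝ)^(k-1)) := by ring
      _ ≤ (1/2) * ((ℓ:ℝ)^(k*ℓ) * (ℓ:ℝ)) * ((n:ℝ) * (n:ℝ)^(k-1)) := by
          have h9 : 2 * Real.exp k * a ≤ 1/2 := by linarith
          have hA : (0:ℝ) ≤ (ℓ:ℝ)^(k*ℓ) * (ℓ:ℝ) := by positivity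
          have hB : (0:ℝ) ≤ (n:ℝ) * (n:ℝ)^(k-1) := by positivity
          exact mul_le_mul_of_nonneg_right (mul_le_mul_of_nonneg_right h9 hA) hB
      _ = (1/2) * (ℓ:ℝ)^(k*ℓ+1) * (n:ℝ)^k := by
          rw [hNk, pow_succ]
  -- conclude
  have hchpos : (0:ℝ) < n.choose ℓ := by
    exact_mod_cast Nat.choose_pos hln
  have expand : (n.choose (ℓ+1) : ℝ) * (((ℓ:ℝ)+1)/n)^(k*(ℓ+1)+1)
      = ((n.choose (ℓ+1) : ℝ) * ((ℓ:ℝ)+1)) * ((ℓ:ℝ)+1)^(k*ℓ+k) / (n:ℝ)^(k*ℓ+k+1) := by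
    rw [div_pow]
    rw [show k*(ℓ+1)+1 = (k*ℓ+k)+1 by ring]
    rw [pow_succ]
    field_simp
  rw [expand, hch]
  rw [div_pow, show k*ℓ+1 = (k*ℓ)+1 from rfl]
  rw [div_le_iff₀ (by positivity)]
  have hgoal : (n.choose ℓ : ℝ) * ((n:ℝ) - ℓ) * ((ℓ:ℝ)+1)^(k*ℓ+k)
      ≤ (n.choose ℓ : ℝ) * ((1/2) * (ℓ:ℝ)^(k*ℓ+1) * (n:ℝ)^k) := by
    rw [mul_assoc]
    exact mul_le_mul_of_nonneg_left key hchpos.le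
  calc (n.choose ℓ : ℝ) * ((n:ℝ) - ℓ) * ((ℓ:ℝ)+1)^(k*ℓ+k)
      ≤ (n.choose ℓ : ℝ) * ((1/2) * (ℓ:ℝ)^(k*ℓ+1) * (n:ℝ)^k) := hgoal
    _ = 1/2 * ((n.choose ℓ:ℝ) * ((ℓ:ℝ)^(k*ℓ+1) / (n:ℝ)^(k*ℓ+1))) * (n:ℝ)^(k*ℓ+k+1) := by
        rw [show k*ℓ+k+1 = (k*ℓ+1)+k by ring, pow_add]
        field_simp
        ring

lemma ecb_sum_bound (k n : ℕ) (hk : 2 ≤ k) (a : ℝ) (ha : 0 < a) (ha1 : a ≤ 1)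
    (haek : 4 * Real.exp k * a ≤ 1) (hn : 2 ≤ n) (L : ℕ) (hL : (L:ℝ) ≤ a * n) :
    ∑ ℓ ∈ Finset.Icc 1 L, (n.choose ℓ : ℝ) * ((ℓ:ℝ)/n)^(k*ℓ+1) ≤ 2 / (n:ℝ)^2 := by
  have hN : (0:ℝ) < n := by positivity
  set t : ℕ → ℝ := fun ℓ => (n.choose ℓ : ℝ) * ((ℓ:ℝ)/n)^(k*ℓ+1) with ht
  have hstep : ∀ ℓ : ℕ, 1 ≤ ℓ → ℓ ≤ L → t ℓ ≤ (1/2:ℝ)^(ℓ-1) * t 1 := by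
    intro ℓ
    induction ℓ with
    | zero => omega
    | succ m ih =>
      intro _ hmL
      rcases Nat.eq_zero_or_pos m with hm0 | hm1
      · subst hm0; simp
      · have hmn : (m:ℝ) + 1 ≤ a * n := by
          have : ((m+1:ℕ):ℝ) ≤ (L:ℝ) := by exact_mod_cast hmL
          push_cast at this; linarith
        have h1 := ecb_ratio_step k n m hk a ha ha1 haek hn hm1 hmn
        have h2 := ih hm1 (by omega)
        have hpos : (0:ℝ) < (1/2:ℝ)^(m-1) := by positivity
        calc t (m+1) ≤ (1/2) * t m := by
              simpa [ht] using h1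
          _ ≤ (1/2) * ((1/2:ℝ)^(m-1) * t 1) := by linarith
          _ = (1/2:ℝ)^(m+1-1) * t 1 := by
              rw [show m+1-1 = (m-1)+1 by omega, pow_succ]
              ring
  have ht1 : t 1 = (1/(n:ℝ))^k := by
    simp only [ht]
    rw [Nat.choose_one_right]
    rw [show k*1+1 = k+1 by ring, pow_succ]
    field_simp
    ring
  have hsum2 : ∑ ℓ ∈ Finset.Icc 1 L, (1/2:ℝ)^(ℓ-1) ≤ 2 := by
    rw [show Finset.Icc 1 L = Finset.Ico 1 (L+1) by rfl, Finset.sum_Ico_eq_sum_range]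
    have : ∀ i ∈ Finset.range (L+1-1), (1/2:ℝ)^(1+i-1) = (1/2:ℝ)^i := by
      intro i _; congr 1; omega
    rw [Finset.sum_congr rfl this]
    have := geom_sum_eq (show (1/2:ℝ) ≠ 1 by norm_num) (L+1-1)
    rw [this]
    have h0 : (0:ℝ) ≤ (1/2:ℝ)^(L+1-1) := by positivity
    rw [show (1/2:ℝ) - 1 = -(1/2) by norm_num]
    have heq : ((1/2:ℝ)^(L+1-1) - 1) / -(1/2) = 2 - 2*(1/2:ℝ)^(L+1-1) := by ring
    rw [heq]; linarith
  have htpos : (0:ℝ) ≤ t 1 := by rw [ht1]; positivity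
  calc ∑ ℓ ∈ Finset.Icc 1 L, t ℓ
      ≤ ∑ ℓ ∈ Finset.Icc 1 L, (1/2:ℝ)^(ℓ-1) * t 1 := by
        apply Finset.sum_le_sum
        intro ℓ hℓ
        rw [Finset.mem_Icc] at hℓ
        exact hstep ℓ hℓ.1 hℓ.2
    _ = (∑ ℓ ∈ Finset.Icc 1 L, (1/2:ℝ)^(ℓ-1)) * t 1 := by rw [Finset.sum_mul]
    _ ≤ 2 * t 1 := mul_le_mul_of_nonneg_right hsum2 htpos
    _ ≤ 2 / (n:ℝ)^2 := by
        rw [ht1]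
        have h1n : (1/(n:ℝ)) ≤ 1 := by
          rw [div_le_one hN]; exact_mod_cast (by omega : 1 ≤ n)
        have : (1/(n:ℝ))^k ≤ (1/(n:ℝ))^2 := pow_le_pow_of_le_one (by positivity) h1n hk
        calc 2 * (1/(n:ℝ))^k ≤ 2 * (1/(n:ℝ))^2 := by linarith
          _ = 2/(n:ℝ)^2 := by field_simp

/-- In the coupon collector problem with `n` coupons, for `k ≥ 2` and
`0 < a < 1/(4 e^k)`, the probability that for some `1 ≤ ℓ ≤ a n` the number of
distinct coupons collected after `kℓ + 1` draws is at most `ℓ` is at most `2/n²`. -/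
theorem early_crossing_bound
    {Ω : Type*} [MeasurableSpace Ω] (μ : Measure Ω) [IsProbabilityMeasure μ]
    (k : ℕ) (hk : 2 ≤ k) (a : ℝ) (ha : 0 < a) (ha' : a < 1 / (4 * Real.exp k))
    (n : ℕ) (hn : 2 ≤ n) (X : ℕ → Ω → Fin n)
    (hmeas : ∀ i, Measurable (X i))
    (hindep : iIndepFun X μ)
    (hunif : ∀ i (x : Fin n), μ {ω | X i ω = x} = 1 / (n : ENNReal)) :
    μ {ω | ∃ ℓ : ℕ, 1 ≤ ℓ ∧ (ℓ : ℝ) ≤ a * n ∧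
        ((Finset.range (k * ℓ + 1)).image (fun i => X i ω)).card ≤ ℓ} ≤
      2 / ((n : ENNReal) ^ 2) := by
  have hexpk : (0:ℝ) < Real.exp k := Real.exp_pos _
  have hek1 : (1:ℝ) ≤ Real.exp k := Real.one_le_exp (by positivity)
  have haek : 4 * Real.exp k * a ≤ 1 := by
    rw [lt_div_iff₀ (by positivity)] at ha'
    nlinarith
  have ha1 : a ≤ 1 := by nlinarith
  have hN : (0:ℝ) < n := by positivity
  set L := ⌊a * n⌋₊ with hLdef
  have hL : (L:ℝ) ≤ a * n := Nat.floor_le (by positivity)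
  have hLn : ∀ ℓ : ℕ, 1 ≤ ℓ → (ℓ:ℝ) ≤ a*n → ℓ ≤ n := by
    intro ℓ h1 h2
    have : (ℓ:ℝ) ≤ n := by nlinarith
    exact_mod_cast this
  -- rewrite event as finite union
  have hev : {ω : Ω | ∃ ℓ : ℕ, 1 ≤ ℓ ∧ (ℓ : ℝ) ≤ a * n ∧
        ((Finset.range (k * ℓ + 1)).image (fun i => X i ω)).card ≤ ℓ}
      = ⋃ ℓ ∈ Finset.Icc 1 L,
        {ω : Ω | ((Finset.range (k * ℓ + 1)).image (fun i => X i ω)).card ≤ ℓ} := by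
    ext ω
    simp only [Set.mem_setOf_eq, Set.mem_iUnion, Finset.mem_Icc, exists_prop]
    constructor
    · rintro ⟨ℓ, h1, h2, h3⟩
      exact ⟨ℓ, ⟨h1, Nat.le_floor h2⟩, h3⟩
    · rintro ⟨ℓ, ⟨h1, h2⟩, h3⟩
      exact ⟨ℓ, h1, le_trans (by exact_mod_cast h2 : (ℓ:ℝ) ≤ L) hL, h3⟩
  rw [hev]
  calc μ (⋃ ℓ ∈ Finset.Icc 1 L,
        {ω : Ω | ((Finset.range (k * ℓ + 1)).image (fun i => X i ω)).card ≤ ℓ})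
      ≤ ∑ ℓ ∈ Finset.Icc 1 L,
          μ {ω : Ω | ((Finset.range (k * ℓ + 1)).image (fun i => X i ω)).card ≤ ℓ} :=
        measure_biUnion_finset_le _ _
    _ ≤ ∑ ℓ ∈ Finset.Icc 1 L, (n.choose ℓ : ENNReal) * ((ℓ : ENNReal)/n)^(k*ℓ+1) := by
        apply Finset.sum_le_sum
        intro ℓ hℓ
        rw [Finset.mem_Icc] at hℓ
        exact ecb_one_level μ n X hmeas hindep hunif k ℓ
          (hLn ℓ hℓ.1 (le_trans (by exact_mod_cast hℓ.2 : (ℓ:ℝ) ≤ L) hL))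
    _ = ∑ ℓ ∈ Finset.Icc 1 L,
          ENNReal.ofReal ((n.choose ℓ : ℝ) * ((ℓ:ℝ)/n)^(k*ℓ+1)) := by
        apply Finset.sum_congr rfl
        intro ℓ _
        rw [ENNReal.ofReal_mul (by positivity), ENNReal.ofReal_pow (by positivity),
          ENNReal.ofReal_div_of_pos hN, ENNReal.ofReal_natCast, ENNReal.ofReal_natCast,
          ENNReal.ofReal_natCast]
    _ = ENNReal.ofReal (∑ ℓ ∈ Finset.Icc 1 L, (n.choose ℓ : ℝ) * ((ℓ:ℝ)/n)^(k*ℓ+1)) := by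
        rw [ENNReal.ofReal_sum_of_nonneg]
        intro ℓ _
        positivity
    _ ≤ ENNReal.ofReal (2 / (n:ℝ)^2) :=
        ENNReal.ofReal_le_ofReal (ecb_sum_bound k n hk a ha ha1 haek hn L hL)
    _ = 2 / ((n : ENNReal) ^ 2) := by
        rw [ENNReal.ofReal_div_of_pos (by positivity), ENNReal.ofReal_pow hN.le,
          ENNReal.ofReal_natCast, ENNReal.ofReal_ofNat]
end

section
/- Fix x₀ > y₀ > 0 and let ξ(λ) be the implicit function with ξ = (1+λ)(1-e^{-ξ}). Let ζ solve the ODE y' = e^{-ξ(x/y - 1)} on (0, x₀] with ζ(x₀) = y₀, and suppose 0 < ζ(x) < x throughout. Then for all 0 < x ≤ x₀: x / (1 + x(1/y₀ - 1/x₀)) ≤ ζ(x) ≤ x (1 - (x/x₀)(1 - y₀/x₀)). -/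
open Real

/-- `2(1-e^{-t}) ≤ t(1+e^{-t})` for `t ≥ 0`. -/
lemma ineqA (t : ℝ) (ht : 0 ≤ t) :
    2 * (1 - Real.exp (-t)) ≤ t * (1 + Real.exp (-t)) := by
  have hd : ∀ s : ℝ, HasDerivAt (fun u : ℝ => u * (1 + Real.exp (-u)) - 2 * (1 - Real.exp (-u)))
      (1 - (1 + s) * Real.exp (-s)) s := by
    intro s
    have he : HasDerivAt (fun u : ℝ => Real.exp (-u)) (Real.exp (-s) * (-1)) s :=
      ((hasDerivAt_id s).neg).exp
    have H := ((hasDerivAt_id s).mul ((hasDerivAt_const s (1:ℝ)).add he)).sub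
      (((hasDerivAt_const s (1:ℝ)).sub he).const_mul 2)
    simp only [id_eq] at H ⊢
    exact H.congr_deriv (by simp only [Pi.add_apply]; ring)
  have hmono : Monotone (fun u : ℝ => u * (1 + Real.exp (-u)) - 2 * (1 - Real.exp (-u))) := by
    apply monotone_of_deriv_nonneg
    · exact fun s => (hd s).differentiableAt
    · intro s
      rw [(hd s).deriv]
      have h := Real.add_one_le_exp s
      have hp : (0:ℝ) < Real.exp (-s) := Real.exp_pos _
      have : (1 + s) * Real.exp (-s) ≤ Real.exp s * Real.exp (-s) := by
        apply mul_le_mul_of_nonneg_right (by linarith) hp.le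
      rw [← Real.exp_add] at this
      simp at this
      linarith
  have h0 := hmono ht
  simp only [zero_mul, neg_zero, Real.exp_zero] at h0
  norm_num at h0
  linarith

/-- `t e^{-t/2} ≤ 1 - e^{-t}` for `t ≥ 0`. -/
lemma ineqB' (t : ℝ) (ht : 0 ≤ t) :
    t * Real.exp (-t / 2) ≤ 1 - Real.exp (-t) := by
  have hd : ∀ s : ℝ, HasDerivAt (fun u : ℝ => 1 - Real.exp (-u) - u * Real.exp (-u / 2))
      (Real.exp (-s) - (1 - s / 2) * Real.exp (-s / 2)) s := by
    intro s
    have he : HasDerivAt (fun u : ℝ => Real.exp (-u)) (Real.exp (-s) * (-1)) s :=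
      ((hasDerivAt_id s).neg).exp
    have he2 : HasDerivAt (fun u : ℝ => Real.exp (-u / 2)) (Real.exp (-s / 2) * (-1 / 2)) s := by
      have : HasDerivAt (fun u : ℝ => -u / 2) (-1 / 2 : ℝ) s := by
        simpa using ((hasDerivAt_id s).neg).div_const 2
      exact this.exp
    have H := ((hasDerivAt_const s (1:ℝ)).sub he).sub ((hasDerivAt_id s).mul he2)
    simp only [id_eq] at H ⊢
    exact H.congr_deriv (by ring)
  have hmono : Monotone (fun u : ℝ => 1 - Real.exp (-u) - u * Real.exp (-u / 2)) := by
    apply monotone_of_deriv_nonneg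
    · exact fun s => (hd s).differentiableAt
    · intro s
      rw [(hd s).deriv]
      have h := Real.add_one_le_exp (-s / 2)
      have hp : (0:ℝ) < Real.exp (-s / 2) := Real.exp_pos _
      have : (1 - s / 2) * Real.exp (-s / 2) ≤ Real.exp (-s / 2) * Real.exp (-s / 2) := by
        apply mul_le_mul_of_nonneg_right (by linarith) hp.le
      rw [← Real.exp_add] at this
      have heq : -s / 2 + -s / 2 = -s := by ring
      rw [heq] at this
      linarith
  have h0 := hmono ht
  simp only [neg_zero, Real.exp_zero, zero_mul, zero_div] at h0
  norm_num at h0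
  linarith

/-- `t² e^{-t} ≤ (1 - e^{-t})²` for `t ≥ 0`. -/
lemma ineqB (t : ℝ) (ht : 0 ≤ t) :
    t ^ 2 * Real.exp (-t) ≤ (1 - Real.exp (-t)) ^ 2 := by
  have h := ineqB' t ht
  have hl : 0 ≤ t * Real.exp (-t / 2) := by positivity
  have hsq := mul_self_le_mul_self hl h
  have hmul : Real.exp (-t / 2) * Real.exp (-t / 2) = Real.exp (-t) := by
    rw [← Real.exp_add]; norm_num
  calc t ^ 2 * Real.exp (-t) = (t * Real.exp (-t / 2)) * (t * Real.exp (-t / 2)) := by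
        rw [← hmul]; ring
    _ ≤ (1 - Real.exp (-t)) * (1 - Real.exp (-t)) := hsq
    _ = (1 - Real.exp (-t)) ^ 2 := by ring

/-- Bounds on the limit completion curve: if `ζ` solves `y' = e^{-ξ(x/y - 1)}` on
`(0, x₀]` with `ζ(x₀) = y₀` and `0 < ζ(x) < x`, then
`x/(1 + x(1/y₀ - 1/x₀)) ≤ ζ(x) ≤ x(1 - (x/x₀)(1 - y₀/x₀))`. -/
theorem completion_curve_bounds
    (x₀ y₀ : ℝ) (hy₀ : 0 < y₀) (hx₀ : y₀ < x₀)
    (xi : ℝ → ℝ)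
    (hxi : ∀ lam : ℝ, 0 < lam →
      0 < xi lam ∧ xi lam = (1 + lam) * (1 - Real.exp (-(xi lam))))
    (ζ : ℝ → ℝ)
    (hζ' : ∀ x ∈ Set.Ioc (0 : ℝ) x₀,
      HasDerivAt ζ (Real.exp (-(xi (x / ζ x - 1)))) x)
    (hζ₀ : ζ x₀ = y₀)
    (hdom : ∀ x ∈ Set.Ioc (0 : ℝ) x₀, 0 < ζ x ∧ ζ x < x) :
    ∀ x ∈ Set.Ioc (0 : ℝ) x₀,
      x / (1 + x * (1 / y₀ - 1 / x₀)) ≤ ζ x ∧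
      ζ x ≤ x * (1 - (x / x₀) * (1 - y₀ / x₀)) := by
  have hx₀pos : 0 < x₀ := hy₀.trans hx₀
  -- pointwise key facts
  have key : ∀ t ∈ Set.Ioc (0:ℝ) x₀,
      t ^ 2 * Real.exp (-(xi (t / ζ t - 1))) ≤ (ζ t) ^ 2 ∧
      2 * ζ t ≤ t * (1 + Real.exp (-(xi (t / ζ t - 1)))) := by
    intro t ht
    obtain ⟨ht0, htx⟩ := ht
    obtain ⟨hc0, hct⟩ := hdom t ⟨ht0, htx⟩
    have hlam : 0 < t / ζ t - 1 := by
      rw [sub_pos, lt_div_iff₀ hc0]; linarith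
    obtain ⟨hxipos, hxieq⟩ := hxi _ hlam
    set e := Real.exp (-(xi (t / ζ t - 1))) with hedef
    have hEpos : 0 < e := Real.exp_pos _
    have heq : xi (t / ζ t - 1) = (t / ζ t) * (1 - e) := by
      rw [hxieq]; ring_nf
    have htζ : 0 < t / ζ t := div_pos ht0 hc0
    have h1E : 0 < 1 - e := by
      rcases lt_or_ge e 1 with h | h
      · linarith
      · exfalso
        have : (t / ζ t) * (1 - e) ≤ 0 :=
          mul_nonpos_of_nonneg_of_nonpos htζ.le (by linarith)
        rw [← heq] at this
        linarith
    constructor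
    · -- t² e ≤ ζ²
      have hB := ineqB (xi (t / ζ t - 1)) hxipos.le
      rw [← hedef] at hB
      rw [heq] at hB
      have hB' : (t / ζ t) ^ 2 * e * (1 - e) ^ 2 ≤ 1 * (1 - e) ^ 2 := by nlinarith [hB]
      have h2 : (t / ζ t) ^ 2 * e ≤ 1 :=
        le_of_mul_le_mul_right hB' (by positivity)
      rw [div_pow, div_mul_eq_mul_div, div_le_one (by positivity)] at h2
      linarith
    · -- 2ζ ≤ t(1+e)
      have hA := ineqA (xi (t / ζ t - 1)) hxipos.le
      rw [← hedef] at hA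
      rw [heq] at hA
      have h3 : 2 * (1 - e) ≤ (t / ζ t) * (1 + e) * (1 - e) := by nlinarith [hA]
      have h4 : 2 ≤ (t / ζ t) * (1 + e) := le_of_mul_le_mul_right h3 h1E
      rw [div_mul_eq_mul_div, le_div_iff₀ hc0] at h4
      linarith
  intro x hx
  obtain ⟨hx0, hxx0⟩ := hx
  obtain ⟨hcx, hcxlt⟩ := hdom x ⟨hx0, hxx0⟩
  have hsub : Set.Icc x x₀ ⊆ Set.Ioc (0:ℝ) x₀ := fun t ht => ⟨lt_of_lt_of_le hx0 ht.1, ht.2⟩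
  have hsubint : interior (Set.Icc x x₀) ⊆ Set.Ioc (0:ℝ) x₀ := by
    rw [interior_Icc]; exact fun t ht => hsub ⟨ht.1.le, ht.2.le⟩
  -- g monotone
  have hgder : ∀ t ∈ Set.Ioc (0:ℝ) x₀, HasDerivAt (fun t => (ζ t)⁻¹ - t⁻¹)
      (((ζ t) ^ 2 - t ^ 2 * Real.exp (-(xi (t / ζ t - 1)))) / (t ^ 2 * (ζ t) ^ 2)) t := by
    intro t ht
    obtain ⟨hc0, hct⟩ := hdom t ht
    set E := Real.exp (-(xi (t / ζ t - 1))) with hE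
    have h1 := (hζ' t ht).inv (ne_of_gt hc0)
    have h2 := hasDerivAt_inv (ne_of_gt ht.1)
    rw [← hE] at h1
    have htne : t ≠ 0 := ne_of_gt ht.1
    have hcne : ζ t ≠ 0 := ne_of_gt hc0
    exact (h1.sub h2).congr_deriv (by field_simp; ring)
  have hg : MonotoneOn (fun t => (ζ t)⁻¹ - t⁻¹) (Set.Icc x x₀) := by
    apply monotoneOn_of_deriv_nonneg (convex_Icc x x₀)
    · exact fun t ht => ((hgder t (hsub ht)).continuousAt).continuousWithinAt
    · exact fun t ht => ((hgder t (hsubint ht)).differentiableAt).differentiableWithinAt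
    · intro t ht
      have ht' := hsubint ht
      rw [(hgder t ht').deriv]
      obtain ⟨hc0, _⟩ := hdom t ht'
      have hk := (key t ht').1
      apply div_nonneg (by linarith) (by positivity)
  -- h antitone
  have hhder : ∀ t ∈ Set.Ioc (0:ℝ) x₀, HasDerivAt (fun t => t⁻¹ - ζ t / t ^ 2)
      ((2 * ζ t - t * (1 + Real.exp (-(xi (t / ζ t - 1))))) / t ^ 3) t := by
    intro t ht
    set E := Real.exp (-(xi (t / ζ t - 1))) with hE
    have h2 := hasDerivAt_inv (ne_of_gt ht.1)
    have hpow : HasDerivAt (fun t : ℝ => t ^ 2) (2 * t) t := by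
      simpa using hasDerivAt_pow 2 t
    have h3 := (hζ' t ht).div hpow (pow_ne_zero 2 (ne_of_gt ht.1))
    rw [← hE] at h3
    have htne : t ≠ 0 := ne_of_gt ht.1
    exact (h2.sub h3).congr_deriv (by field_simp; ring)
  have hh : AntitoneOn (fun t => t⁻¹ - ζ t / t ^ 2) (Set.Icc x x₀) := by
    apply antitoneOn_of_deriv_nonpos (convex_Icc x x₀)
    · exact fun t ht => ((hhder t (hsub ht)).continuousAt).continuousWithinAt
    · exact fun t ht => ((hhder t (hsubint ht)).differentiableAt).differentiableWithinAt
    · intro t ht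
      have ht' := hsubint ht
      rw [(hhder t ht').deriv]
      have hk := (key t ht').2
      have ht0 : (0:ℝ) < t := ht'.1
      apply div_nonpos_of_nonpos_of_nonneg (by linarith) (pow_nonneg ht0.le 3)
  have hxmem : x ∈ Set.Icc x x₀ := ⟨le_refl x, hxx0⟩
  have hx₀mem : x₀ ∈ Set.Icc x x₀ := ⟨hxx0, le_refl x₀⟩
  have gineq : (ζ x)⁻¹ - x⁻¹ ≤ y₀⁻¹ - x₀⁻¹ := by
    have := hg hxmem hx₀mem hxx0
    simpa [hζ₀] using this
  have hineq : x₀⁻¹ - y₀ / x₀ ^ 2 ≤ x⁻¹ - ζ x / x ^ 2 := by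
    have := hh hxmem hx₀mem hxx0
    simpa [hζ₀] using this
  constructor
  · -- lower bound
    have hdpos : 0 < 1 / y₀ - 1 / x₀ := by
      rw [sub_pos]
      exact one_div_lt_one_div_of_lt hy₀ hx₀
    have hD : 0 < 1 + x * (1 / y₀ - 1 / x₀) := by
      have := mul_pos hx0 hdpos
      linarith
    rw [div_le_iff₀ hD]
    have e1 : x * ζ x * ((ζ x)⁻¹ - x⁻¹) = x - ζ x := by
      field_simp
    have e2 := mul_le_mul_of_nonneg_left gineq (le_of_lt (mul_pos hx0 hcx))
    rw [e1] at e2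
    have : x * ζ x * (y₀⁻¹ - x₀⁻¹) = ζ x * (x * (1 / y₀ - 1 / x₀)) := by
      field_simp
    nlinarith [e2]
  · -- upper bound
    have e3 : x ^ 2 * (x⁻¹ - ζ x / x ^ 2) = x - ζ x := by
      field_simp
    have e4 := mul_le_mul_of_nonneg_left hineq (sq_nonneg x)
    rw [e3] at e4
    have e5 : x * (1 - x / x₀ * (1 - y₀ / x₀)) = x - (x ^ 2 * (x₀⁻¹ - y₀ / x₀ ^ 2)) := by
      field_simp
    linarith [e4, e5.ge, e5.le]
end
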